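/- Let A be a closed, densely defined linear operator on a complex Hilbert space H with 0 ∈ ρ(A), and suppose the family (P_n, A_n)_{n∈ℕ} approximates A strongly. Let s_1, …, s_m ∈ ρ(A) be such that sup_n ‖(A_n − s_j)⁻¹‖ < ∞ for all j = 1, …, m. Let 0 < ε < 1/max_{j} ‖(A − s_j)⁻¹‖ and δ_j > ‖(A−s_j)⁻¹‖²ε/(1 − ‖(A−s_j)⁻¹‖ε) for all j. Then there exists n₀ ∈ ℕ such that σ_ε(A) ⊂ ⋂_{j=1}^m [ (B_{δ_j}(W((A_n − s_j)⁻¹)))⁻¹ + s_j ] for all n ≥ n₀. -/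

import Mathlib

open Filter Topology Metric

noncomputable section

variable {H : Type*} [NormedAddCommGroup H] [InnerProductSpace ℂ H] [CompleteSpace H]

/-- `R : H →L[ℂ] H` is a (two-sided, everywhere defined) bounded inverse of `A - lam`,
i.e. `lam` belongs to the resolvent set of `A` with resolvent `R`. -/
def IsResolventAt (A : H →ₗ.[ℂ] H) (lam : ℂ) (R : H →L[ℂ] H) : Prop :=
  (∀ x : A.domain, R (A x - lam • (x : H)) = (x : H)) ∧
  ∀ y : H, ∃ hy : R y ∈ A.domain, A ⟨R y, hy⟩ - lam • R y = y

/-- The resolvent set `ρ(A)` of a (possibly unbounded) operator `A`. -/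
def presolventSet (A : H →ₗ.[ℂ] H) : Set ℂ :=
  {lam | ∃ R, IsResolventAt A lam R}

-- The resolvent operator `(A - lam)⁻¹` (with junk value `0` off the resolvent set).
open scoped Classical in
def resolventOf (A : H →ₗ.[ℂ] H) (lam : ℂ) : H →L[ℂ] H :=
  if h : ∃ R, IsResolventAt A lam R then h.choose else 0

/-- The `ε`-pseudospectrum `σ_ε(A) = {λ : ‖(A-λ)⁻¹‖ > 1/ε}`, where `‖(A-λ)⁻¹‖` is
understood as `∞` for `λ` in the spectrum. -/
def pseudoSpectrum (ε : ℝ) (A : H →ₗ.[ℂ] H) : Set ℂ :=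
  {lam | lam ∉ presolventSet A ∨ 1 / ε < ‖resolventOf A lam‖}

/-- The numerical range `W(T) = {⟨T x, x⟩ : ‖x‖ = 1}` of a bounded operator `T`;
`⟨T x, x⟩` (inner ℂ product linear in the first argument) is written as
`inner x (T x)` in the mathlib convention. -/
def numRange (T : H →L[ℂ] H) : Set ℂ :=
  {z | ∃ x : H, ‖x‖ = 1 ∧ z = (inner ℂ x (T x) : ℂ)}

/-- The numerical range of a (possibly unbounded) operator. -/
def pnumRange (A : H →ₗ.[ℂ] H) : Set ℂ :=
  {z | ∃ x : A.domain, ‖(x : H)‖ = 1 ∧ z = (inner ℂ (x : H) (A x) : ℂ)}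

/-- The numerical radius of a bounded operator. -/
def nradius (T : H →L[ℂ] H) : ℝ :=
  sSup ((fun z => ‖z‖) '' numRange T)

/-- The numerical range of a bounded operator on a subspace `U` of `H`. -/
def numRangeSub {U : Submodule ℂ H} (T : U →L[ℂ] U) : Set ℂ :=
  {z | ∃ x : U, ‖(x : H)‖ = 1 ∧ z = (inner ℂ (x : H) ((T x : U) : H) : ℂ)}

/-- `B_δ(U) = {z : dist (z, U) < δ}`, the `δ`-neighborhood of a set `U ⊆ ℂ`. -/
def nbhdSet (δ : ℝ) (U : Set ℂ) : Set ℂ :=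
  {z | ∃ u ∈ U, dist z u < δ}

/-- `U⁻¹ = {z⁻¹ : z ∈ U \ {0}}`. -/
def invSet (U : Set ℂ) : Set ℂ :=
  {z | ∃ u ∈ U, u ≠ 0 ∧ z = u⁻¹}

/-- `U + s = {z + s : z ∈ U}`. -/
def shiftSet (U : Set ℂ) (s : ℂ) : Set ℂ :=
  {z | ∃ u ∈ U, z = u + s}

set_option maxHeartbeats 1000000 in
lemma boundedBelow_invertible {H : Type*} [NormedAddCommGroup H] [InnerProductSpace ℂ H]
    [CompleteSpace H] (T : H →L[ℂ] H) (c : ℝ) (hc : 0 < c)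
    (h : ∀ x : H, ‖x‖ = 1 → c ≤ ‖(inner ℂ x (T x) : ℂ)‖) :
    ∃ S : H →L[ℂ] H, (∀ y, S (T y) = y) ∧ (∀ y, T (S y) = y) ∧ ∀ y, ‖S y‖ ≤ c⁻¹ * ‖y‖ := by
  have hsq : ∀ x : H, c * ‖x‖ ^ 2 ≤ ‖(inner ℂ x (T x) : ℂ)‖ := by
    intro x
    rcases eq_or_ne x 0 with rfl | hx
    · simp
    · have hnx : ‖x‖ ≠ 0 := norm_ne_zero_iff.mpr hx
      have h1 : ‖(‖x‖⁻¹ : ℂ) • x‖ = 1 := by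
        rw [norm_smul]
        simp [hnx]
      have := h _ h1
      rw [map_smul, inner_smul_left, inner_smul_right] at this
      have habs : ‖(starRingEnd ℂ) ((‖x‖:ℂ)⁻¹) * ((‖x‖:ℂ)⁻¹ * (inner ℂ x (T x) : ℂ))‖
          = ‖x‖⁻¹ * (‖x‖⁻¹ * ‖(inner ℂ x (T x) : ℂ)‖) := by
        simp [norm_mul, RCLike.norm_conj]
      rw [habs] at this
      have hpos : (0:ℝ) < ‖x‖ := lt_of_le_of_ne (norm_nonneg x) (Ne.symm hnx)
      have := mul_le_mul_of_nonneg_left this (le_of_lt (mul_pos hpos hpos))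
      calc c * ‖x‖ ^ 2 = ‖x‖ * ‖x‖ * c := by ring
        _ ≤ ‖x‖ * ‖x‖ * (‖x‖⁻¹ * (‖x‖⁻¹ * ‖(inner ℂ x (T x) : ℂ)‖)) := this
        _ = ‖(inner ℂ x (T x) : ℂ)‖ := by field_simp
  have hlow : ∀ x : H, c * ‖x‖ ≤ ‖T x‖ := by
    intro x
    rcases eq_or_ne x 0 with rfl | hx
    · simp
    · have hnx : (0:ℝ) < ‖x‖ := norm_pos_iff.mpr hx
      have h1 := hsq x
      have h2 : ‖(inner ℂ x (T x) : ℂ)‖ ≤ ‖x‖ * ‖T x‖ := norm_inner_le_norm x (T x)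
      nlinarith
  have hlowadj : ∀ x : H, c * ‖x‖ ≤ ‖ContinuousLinearMap.adjoint T x‖ := by
    intro x
    rcases eq_or_ne x 0 with rfl | hx
    · simp
    · have hnx : (0:ℝ) < ‖x‖ := norm_pos_iff.mpr hx
      have h1 := hsq x
      have heq : ‖(inner ℂ x (ContinuousLinearMap.adjoint T x) : ℂ)‖
          = ‖(inner ℂ x (T x) : ℂ)‖ := by
        rw [ContinuousLinearMap.adjoint_inner_right]
        exact norm_inner_symm (T x) x
      have h2 : ‖(inner ℂ x (ContinuousLinearMap.adjoint T x) : ℂ)‖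
          ≤ ‖x‖ * ‖ContinuousLinearMap.adjoint T x‖ := norm_inner_le_norm _ _
      rw [heq] at h2
      nlinarith
  have hanti : AntilipschitzWith (⟨c, hc.le⟩ : NNReal)⁻¹ T :=
    T.antilipschitz_of_bound (by
      intro x
      have := hlow x
      have hco : (((⟨c, hc.le⟩ : NNReal)⁻¹ : NNReal) : ℝ) = c⁻¹ := NNReal.coe_inv _
      rw [hco, inv_mul_eq_div, le_div_iff₀ hc]
      nlinarith)
  have hker : LinearMap.ker (T : H →ₗ[ℂ] H) = ⊥ := by
    rw [Submodule.eq_bot_iff]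
    intro x hx
    have hx0 : T x = 0 := hx
    have := hlow x
    rw [hx0, norm_zero] at this
    have hle : ‖x‖ ≤ 0 := by nlinarith
    simpa using le_antisymm hle (norm_nonneg x)
  have hclosed : IsClosed (Set.range T) := hanti.isClosed_range T.uniformContinuous
  have hrange : LinearMap.range (T : H →ₗ[ℂ] H) = ⊤ := by
    have hcl : IsClosed ((LinearMap.range (T : H →ₗ[ℂ] H) : Submodule ℂ H) : Set H) := by
      simpa [LinearMap.coe_range] using hclosed
    haveI : CompleteSpace (LinearMap.range (T : H →ₗ[ℂ] H)) := hcl.completeSpace_coe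
    rw [← Submodule.orthogonal_eq_bot_iff]
    rw [Submodule.eq_bot_iff]
    intro y hy
    have hTy : ContinuousLinearMap.adjoint T y = 0 := by
      have h0 : (inner ℂ (ContinuousLinearMap.adjoint T y)
          (ContinuousLinearMap.adjoint T y) : ℂ) = 0 := by
        rw [ContinuousLinearMap.adjoint_inner_left, ← inner_conj_symm]
        have h0 := (Submodule.mem_orthogonal _ _).mp hy _
          (LinearMap.mem_range_self (T : H →ₗ[ℂ] H) (ContinuousLinearMap.adjoint T y))
        rw [show (inner ℂ (T (ContinuousLinearMap.adjoint T y)) y : ℂ) = 0 from h0]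
        simp
      exact inner_self_eq_zero.mp h0
    have := hlowadj y
    rw [hTy, norm_zero] at this
    have : ‖y‖ ≤ 0 := by nlinarith
    simpa using le_antisymm this (norm_nonneg y)
  let e := ContinuousLinearEquiv.ofBijective T hker hrange
  refine ⟨(e.symm : H →L[ℂ] H), ?_, ?_, ?_⟩
  · intro y
    exact e.symm_apply_apply y
  · intro y
    exact e.apply_symm_apply y
  · intro y
    show ‖e.symm y‖ ≤ c⁻¹ * ‖y‖
    have := hlow (e.symm y)
    have h2 : T (e.symm y) = y := e.apply_symm_apply y
    rw [h2] at this
    rw [inv_mul_eq_div, le_div_iff₀ hc]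
    nlinarith

lemma resolventOf_eq (A : H →ₗ.[ℂ] H) (lam : ℂ) (R : H →L[ℂ] H)
    (h : IsResolventAt A lam R) : resolventOf A lam = R := by
  classical
  have hex : ∃ R', IsResolventAt A lam R' := ⟨R, h⟩
  rw [resolventOf, dif_pos hex]
  have hspec := hex.choose_spec
  ext y
  obtain ⟨hy, hAy⟩ := h.2 y
  have := hspec.1 ⟨R y, hy⟩
  simp only at this
  rw [hAy] at this
  exact this

lemma resolventOf_spec (A : H →ₗ.[ℂ] H) (lam : ℂ) (h : lam ∈ presolventSet A) :
    IsResolventAt A lam (resolventOf A lam) := by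
  obtain ⟨R, hR⟩ := h
  rw [resolventOf_eq A lam R hR]
  exact hR

lemma shifted_formula (lam sc : ℂ) (R S : H →L[ℂ] H)
    (hS2 : ∀ y, R (S y) - (lam - sc)⁻¹ • S y = y) :
    ∀ y, (R - R.comp (S.comp R)) y = (-(lam - sc)⁻¹) • S (R y) := by
  intro y
  have h := hS2 (R y)
  simp only [ContinuousLinearMap.sub_apply, ContinuousLinearMap.comp_apply]
  have h2 : R (S (R y)) = R y + (lam - sc)⁻¹ • S (R y) :=
    eq_add_of_sub_eq h
  rw [h2]
  module

lemma shifted_resolvent (A : H →ₗ.[ℂ] H) (sc lam : ℂ) (R S : H →L[ℂ] H)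
    (hR : IsResolventAt A sc R) (hu : lam - sc ≠ 0)
    (hS1 : ∀ y, S (R y - (lam - sc)⁻¹ • y) = y)
    (hS2 : ∀ y, R (S y) - (lam - sc)⁻¹ • S y = y) :
    IsResolventAt A lam (R - R.comp (S.comp R)) := by
  have hEq := shifted_formula (H := H) lam sc R S hS2
  have hcomm : ∀ w, S (R w) = R (S w) := by
    intro w
    have e0 : R w = R (R (S w) - (lam - sc)⁻¹ • S w) := by rw [hS2 w]
    have e1 : R (R (S w) - (lam - sc)⁻¹ • S w)
        = R (R (S w)) - (lam - sc)⁻¹ • R (S w) := by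
      rw [map_sub, map_smul]
    calc S (R w) = S (R (R (S w)) - (lam - sc)⁻¹ • R (S w)) := by rw [← e1, ← e0]
      _ = R (S w) := hS1 (R (S w))
  constructor
  · intro x
    have hx1 := hR.1 x
    have e2 : A x - lam • (x : H) = (A x - sc • (x : H)) - (lam - sc) • (x : H) := by
      module
    have e4 : R (A x - lam • (x : H)) = (x : H) - (lam - sc) • R (x : H) := by
      rw [e2, map_sub, map_smul, hx1]
    have e3 : (x : H) - (lam - sc) • R (x : H)
        = (-(lam - sc)) • (R (x : H) - (lam - sc)⁻¹ • (x : H)) := by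
      match_scalars
      · field_simp
      · ring
    rw [hEq, e4, e3, map_smul, hS1]
    match_scalars
    field_simp
  · intro y
    have hRlv : (R - R.comp (S.comp R)) y = R ((-(lam - sc)⁻¹) • S y) := by
      rw [hEq, map_smul, hcomm]
    obtain ⟨hv, hAv⟩ := hR.2 ((-(lam - sc)⁻¹) • S y)
    refine ⟨hRlv ▸ hv, ?_⟩
    have hsub : (⟨(R - R.comp (S.comp R)) y, hRlv ▸ hv⟩ : A.domain)
        = ⟨R ((-(lam - sc)⁻¹) • S y), hv⟩ := Subtype.ext hRlv
    rw [hsub]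
    have hAv' : A ⟨R ((-(lam - sc)⁻¹) • S y), hv⟩
        = (-(lam - sc)⁻¹) • S y + sc • R ((-(lam - sc)⁻¹) • S y) :=
      eq_add_of_sub_eq hAv
    rw [hAv', hRlv, map_smul]
    have hS2y := hS2 y
    conv_rhs => rw [← hS2y]
    match_scalars
    · ring
    · field_simp
      ring

set_option maxHeartbeats 2000000 in
/-- Theorem 3.6. -/
theorem pseudospectrum_subset_iInter_shifted_approx
    (A : H →ₗ.[ℂ] H)
    (hclosed : IsClosed (A.graph : Set (H × H)))
    (hdense : Dense (A.domain : Set H))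
    (h0 : (0 : ℂ) ∈ presolventSet A)
    (U : ℕ → Submodule ℂ H) (hUfin : ∀ n, FiniteDimensional ℂ (U n))
    (P : ℕ → H →L[ℂ] H)
    (hPmem : ∀ n x, P n x ∈ U n)
    (hPproj : ∀ n, ∀ x ∈ U n, P n x = x)
    (hPconv : ∀ x : H, Tendsto (fun n => P n x) atTop (𝓝 x))
    (T : ∀ n, ↥(U n) →L[ℂ] ↥(U n)) (Tinv : ∀ n, ↥(U n) →L[ℂ] ↥(U n))
    (hTinv : ∀ n, (∀ u, Tinv n (T n u) = u) ∧ ∀ u, T n (Tinv n u) = u)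
    (happrox : ∀ x : H,
      Tendsto (fun n => (↑(Tinv n ⟨P n x, hPmem n x⟩) : H)) atTop
        (𝓝 (resolventOf A 0 x)))
    (m : ℕ) (s : Fin m → ℂ) (hs : ∀ j, s j ∈ presolventSet A)
    (Rn : Fin m → ∀ n, ↥(U n) →L[ℂ] ↥(U n))
    (hRn : ∀ j n, (∀ u, Rn j n (T n u - s j • u) = u) ∧
      ∀ u, T n (Rn j n u) - s j • Rn j n u = u)
    (hRb : ∀ j, ∃ C : ℝ, ∀ n, ‖Rn j n‖ ≤ C)
    (hne : (Finset.univ : Finset (Fin m)).Nonempty)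
    (ε : ℝ) (hε0 : 0 < ε)
    (hε : ε < 1 / Finset.sup' Finset.univ hne (fun j => ‖resolventOf A (s j)‖))
    (δ : Fin m → ℝ)
    (hδ : ∀ j, ‖resolventOf A (s j)‖ ^ 2 * ε / (1 - ‖resolventOf A (s j)‖ * ε)
      < δ j) :
    ∃ n₀ : ℕ, ∀ n ≥ n₀,
      pseudoSpectrum ε A ⊆
        ⋂ j : Fin m,
          shiftSet (invSet (nbhdSet (δ j) (numRangeSub (Rn j n)))) (s j) := by
  classical
  -- Basic constants
  obtain ⟨j0, -⟩ := id hne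
  set Ms := Finset.sup' Finset.univ hne (fun j => ‖resolventOf A (s j)‖) with hMsdef
  have hMs0 : (0:ℝ) ≤ Ms :=
    le_trans (norm_nonneg _) (Finset.le_sup' (fun j => ‖resolventOf A (s j)‖) (Finset.mem_univ j0))
  have hMspos : 0 < Ms := by
    rcases eq_or_lt_of_le hMs0 with h | h
    · exfalso
      rw [← h] at hε
      simp at hε
      linarith
    · exact h
  have hMslt : Ms < 1 / ε := by
    rw [lt_div_iff₀ hε0]
    have := (lt_div_iff₀ hMspos).mp hε
    nlinarith
  set Rr := fun j => resolventOf A (s j) with hRrdef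
  have hRr : ∀ j, IsResolventAt A (s j) (Rr j) := fun j => resolventOf_spec A (s j) (hs j)
  have htMs : ∀ j, ‖Rr j‖ ≤ Ms := fun j => Finset.le_sup' (fun j => ‖resolventOf A (s j)‖) (Finset.mem_univ j)
  have htε : ∀ j, ‖Rr j‖ * ε < 1 := by
    intro j
    have h1 : ‖Rr j‖ < 1 / ε := lt_of_le_of_lt (htMs j) hMslt
    rw [lt_div_iff₀ hε0] at h1
    linarith
  set δ' := fun j => ‖Rr j‖ ^ 2 * ε / (1 - ‖Rr j‖ * ε) with hδ'def
  have hden : ∀ j, 0 < 1 - ‖Rr j‖ * ε := fun j => by linarith [htε j]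
  have hδ'0 : ∀ j, 0 ≤ δ' j := by
    intro j
    apply div_nonneg _ (le_of_lt (hden j))
    positivity
  set γ := fun j => (δ j - δ' j) / 3 with hγdef
  have hγ : ∀ j, 0 < γ j := by
    intro j
    have := hδ j
    simp only [hγdef]
    simp only [hδ'def] at *
    linarith
  -- Strong convergence of the approximate shifted resolvents
  have hconv : ∀ (j : Fin m) (x : H),
      Tendsto (fun n => ((Rn j n ⟨P n x, hPmem n x⟩ : U n) : H)) atTop (𝓝 (Rr j x)) := by
    intro j x
    obtain ⟨C, hC⟩ := hRb j
    have hC0 : (0:ℝ) ≤ C := le_trans (norm_nonneg (Rn j 0)) (hC 0)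
    obtain ⟨hy, hAy⟩ := (hRr j).2 x
    set y := Rr j x with hydef
    set w := x + s j • y with hwdef
    have hR0w : resolventOf A 0 w = y := by
      have h1 := (resolventOf_spec A 0 h0).1 ⟨y, hy⟩
      simp only [zero_smul, sub_zero] at h1
      have hAyy : A ⟨y, hy⟩ = w := by
        rw [hwdef]
        exact eq_add_of_sub_eq hAy
      rw [hAyy] at h1
      exact h1
    have hz' := happrox w
    rw [hR0w] at hz'
    have hkey : ∀ n, (Rn j n ⟨P n x, hPmem n x⟩ : U n)
        = Tinv n ⟨P n w, hPmem n w⟩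
          - s j • Rn j n (⟨P n y, hPmem n y⟩ - Tinv n ⟨P n w, hPmem n w⟩) := by
      intro n
      set zn := Tinv n ⟨P n w, hPmem n w⟩ with hzndef
      have h1 : T n zn = ⟨P n w, hPmem n w⟩ := (hTinv n).2 _
      have hPw : (⟨P n w, hPmem n w⟩ : U n)
          = ⟨P n x, hPmem n x⟩ + s j • ⟨P n y, hPmem n y⟩ := by
        apply Subtype.ext
        push_cast
        rw [hwdef, map_add, map_smul]
      have h2 := (hRn j n).1 zn
      rw [h1, hPw] at h2
      have h3 : (⟨P n x, hPmem n x⟩ : U n) + s j • ⟨P n y, hPmem n y⟩ - s j • zn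
          = ⟨P n x, hPmem n x⟩ + s j • (⟨P n y, hPmem n y⟩ - zn) := by
        rw [smul_sub]
        abel
      rw [h3, map_add, map_smul] at h2
      rw [eq_sub_iff_add_eq]
      exact h2
    have hdiff : Tendsto (fun n => (P n y : H) - ((Tinv n ⟨P n w, hPmem n w⟩ : U n) : H))
        atTop (𝓝 0) := by
      have := (hPconv y).sub hz'
      simpa using this
    have hterm : Tendsto
        (fun n => ((s j • Rn j n (⟨P n y, hPmem n y⟩ - Tinv n ⟨P n w, hPmem n w⟩) : U n) : H))
        atTop (𝓝 0) := by
      apply squeeze_zero_norm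
        (a := fun n => ‖s j‖ * (C * ‖(P n y : H) - ((Tinv n ⟨P n w, hPmem n w⟩ : U n) : H)‖))
      · intro n
        have e1 : ‖((s j • Rn j n (⟨P n y, hPmem n y⟩ - Tinv n ⟨P n w, hPmem n w⟩) : U n) : H)‖
            = ‖s j‖ * ‖Rn j n (⟨P n y, hPmem n y⟩ - Tinv n ⟨P n w, hPmem n w⟩)‖ := by
          rw [Submodule.norm_coe, norm_smul]
        rw [e1]
        apply mul_le_mul_of_nonneg_left _ (norm_nonneg (s j))
        calc ‖Rn j n (⟨P n y, hPmem n y⟩ - Tinv n ⟨P n w, hPmem n w⟩)‖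
            ≤ ‖Rn j n‖ * ‖(⟨P n y, hPmem n y⟩ : U n) - Tinv n ⟨P n w, hPmem n w⟩‖ :=
              ContinuousLinearMap.le_opNorm _ _
          _ ≤ C * ‖(⟨P n y, hPmem n y⟩ : U n) - Tinv n ⟨P n w, hPmem n w⟩‖ :=
              mul_le_mul_of_nonneg_right (hC n) (norm_nonneg _)
          _ = C * ‖(P n y : H) - ((Tinv n ⟨P n w, hPmem n w⟩ : U n) : H)‖ := by
              rw [← Submodule.norm_coe]
              push_cast
              rfl
      · have := (hdiff.norm.const_mul C).const_mul ‖s j‖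
        simpa using this
    have hfinal := hz'.sub hterm
    rw [sub_zero] at hfinal
    apply hfinal.congr
    intro n
    rw [hkey n]
    push_cast
    ring
  -- Approximation of the numerical range, uniformly (Claim B)
  have hB : ∀ j : Fin m, ∀ᶠ n in atTop, ∀ w ∈ numRange (Rr j),
      ∃ w' ∈ numRangeSub (Rn j n), dist w w' < 2 * γ j := by
    intro j
    have htb : TotallyBounded (numRange (Rr j)) := by
      apply TotallyBounded.subset ?_ (isCompact_closedBall (0:ℂ) ‖Rr j‖).totallyBounded
      rintro wz ⟨x, hx1, rfl⟩
      rw [mem_closedBall, dist_zero_right]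
      calc ‖(inner ℂ x (Rr j x) : ℂ)‖ ≤ ‖x‖ * ‖Rr j x‖ := norm_inner_le_norm _ _
        _ ≤ ‖x‖ * (‖Rr j‖ * ‖x‖) :=
            mul_le_mul_of_nonneg_left (ContinuousLinearMap.le_opNorm _ _) (norm_nonneg _)
        _ = ‖Rr j‖ := by rw [hx1]; ring
    obtain ⟨tt, htfin, htcov⟩ := Metric.totallyBounded_iff.mp htb (γ j / 2) (half_pos (hγ j))
    have hpoint : ∀ w ∈ numRange (Rr j), ∀ᶠ n in atTop,
        ∃ w' ∈ numRangeSub (Rn j n), dist w w' < γ j := by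
      intro w hw
      obtain ⟨x, hx1, hxw⟩ := hw
      have h2 : Tendsto
          (fun n => (inner ℂ (P n x) ((Rn j n ⟨P n x, hPmem n x⟩ : U n) : H) : ℂ))
          atTop (𝓝 (inner ℂ x (Rr j x) : ℂ)) :=
        (hPconv x).inner (hconv j x)
      have h1 : Tendsto (fun n => ‖P n x‖) atTop (𝓝 1) := by
        simpa [hx1] using (hPconv x).norm
      have hc1 : Tendsto (fun n => ((‖P n x‖ : ℝ) : ℂ)) atTop (𝓝 1) := by
        have := (Complex.continuous_ofReal.tendsto 1).comp h1
        simpa [Function.comp_def] using this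
      have h3 : Tendsto
          (fun n => (((‖P n x‖ : ℝ) : ℂ))⁻¹ ^ 2
            * (inner ℂ (P n x) ((Rn j n ⟨P n x, hPmem n x⟩ : U n) : H) : ℂ))
          atTop (𝓝 w) := by
        have hinv := (hc1.inv₀ one_ne_zero).pow 2
        have := hinv.mul h2
        simpa [hxw] using this
      have h4 := (Metric.tendsto_nhds.mp h3) (γ j) (hγ j)
      have h5 : ∀ᶠ n in atTop, (1:ℝ)/2 < ‖P n x‖ :=
        h1.eventually (eventually_gt_nhds (by norm_num))
      filter_upwards [h4, h5] with n hn4 hn5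
      have hPnx0 : (0:ℝ) < ‖P n x‖ := by linarith
      have hPnxne : ‖P n x‖ ≠ 0 := ne_of_gt hPnx0
      set xn : U n := (((‖P n x‖ : ℝ) : ℂ))⁻¹ • (⟨P n x, hPmem n x⟩ : U n) with hxndef
      have hxnnorm : ‖(xn : H)‖ = 1 := by
        rw [hxndef]
        push_cast
        rw [norm_smul]
        simp [hPnxne]
      have hval : (inner ℂ (xn : H) ((Rn j n xn : U n) : H) : ℂ)
          = (((‖P n x‖ : ℝ) : ℂ))⁻¹ ^ 2
            * (inner ℂ (P n x) ((Rn j n ⟨P n x, hPmem n x⟩ : U n) : H) : ℂ) := by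
        rw [hxndef, map_smul]
        push_cast
        rw [inner_smul_left, inner_smul_right]
        simp [Complex.conj_ofReal]
        ring
      refine ⟨_, ⟨xn, hxnnorm, rfl⟩, ?_⟩
      rw [← hval] at hn4
      rw [dist_comm] at hn4
      exact hn4
    have hper : ∀ y ∈ tt, ∀ᶠ n in atTop, ∀ w ∈ numRange (Rr j), dist w y < γ j / 2 →
        ∃ w' ∈ numRangeSub (Rn j n), dist w w' < 2 * γ j := by
      intro y hy
      by_cases hyne : ∃ w0 ∈ numRange (Rr j), dist w0 y < γ j / 2
      · obtain ⟨w0, hw0, hd0⟩ := hyne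
        filter_upwards [hpoint w0 hw0] with n hn w hw hd
        obtain ⟨w', hw', hdw⟩ := hn
        refine ⟨w', hw', ?_⟩
        have hww0 : dist w w0 ≤ dist w y + dist y w0 := dist_triangle _ _ _
        have h0y : dist y w0 = dist w0 y := dist_comm _ _
        calc dist w w' ≤ dist w w0 + dist w0 w' := dist_triangle _ _ _
          _ < 2 * γ j := by linarith
      · filter_upwards with n w hw hd
        exact absurd ⟨w, hw, hd⟩ hyne
    have hall := (eventually_all_finite htfin).mpr hper
    filter_upwards [hall] with n hn w hw
    have hcov := htcov hw
    simp only [Set.mem_iUnion] at hcov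
    obtain ⟨y, hy, hwball⟩ := hcov
    exact hn y hy w hw (mem_ball.mp hwball)
  have hBall : ∀ᶠ n in atTop, ∀ j : Fin m, ∀ w ∈ numRange (Rr j),
      ∃ w' ∈ numRangeSub (Rn j n), dist w w' < 2 * γ j := eventually_all.mpr hB
  obtain ⟨n₀, hn₀⟩ := eventually_atTop.mp hBall
  refine ⟨n₀, fun n hn lam hlam => ?_⟩
  rw [Set.mem_iInter]
  intro j
  simp only [pseudoSpectrum, Set.mem_setOf_eq] at hlam
  -- lam ≠ s j
  have hlamne : lam - s j ≠ 0 := by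
    intro hzero
    have hlameq : lam = s j := by
      have := sub_eq_zero.mp hzero
      exact this
    rcases hlam with h | h
    · exact h (hlameq ▸ hs j)
    · rw [hlameq] at h
      have h2 : ‖Rr j‖ < 1 / ε := lt_of_le_of_lt (htMs j) hMslt
      rw [hRrdef] at h2
      linarith
  set z : ℂ := (lam - s j)⁻¹ with hzdef
  -- Claim A : z is close to the numerical range of Rr j
  have hA : ∃ w ∈ numRange (Rr j), dist z w < δ' j + γ j := by
    by_contra hcon
    push_neg at hcon
    set c := δ' j + γ j with hcdef
    have hc : 0 < c := by
      have := hδ'0 j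
      have := hγ j
      simp only [hcdef]
      linarith
    have hhyp : ∀ x : H, ‖x‖ = 1 →
        c ≤ ‖(inner ℂ x ((Rr j - z • (1 : H →L[ℂ] H)) x) : ℂ)‖ := by
      intro x hx1
      have hmem : (inner ℂ x (Rr j x) : ℂ) ∈ numRange (Rr j) := ⟨x, hx1, rfl⟩
      have := hcon _ hmem
      have hinx : (inner ℂ x x : ℂ) = 1 := by
        rw [inner_self_eq_norm_sq_to_K, hx1]
        norm_num
      have hval : (inner ℂ x ((Rr j - z • (1 : H →L[ℂ] H)) x) : ℂ)
          = (inner ℂ x (Rr j x) : ℂ) - z := by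
        simp only [ContinuousLinearMap.sub_apply, ContinuousLinearMap.smul_apply,
          ContinuousLinearMap.one_apply, inner_sub_right, inner_smul_right, hinx]
        ring
      rw [hval]
      rw [Complex.dist_eq] at this
      calc c ≤ ‖z - (inner ℂ x (Rr j x) : ℂ)‖ := this
        _ = ‖(inner ℂ x (Rr j x) : ℂ) - z‖ := by
            rw [norm_sub_rev]
    obtain ⟨S, hS1, hS2, hSb⟩ :=
      boundedBelow_invertible (Rr j - z • (1 : H →L[ℂ] H)) c hc hhyp
    have hS1' : ∀ y, S (Rr j y - (lam - s j)⁻¹ • y) = y := by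
      intro y
      have := hS1 y
      simpa [ContinuousLinearMap.sub_apply, ContinuousLinearMap.smul_apply,
        ContinuousLinearMap.one_apply, hzdef] using this
    have hS2' : ∀ y, Rr j (S y) - (lam - s j)⁻¹ • S y = y := by
      intro y
      have := hS2 y
      simpa [ContinuousLinearMap.sub_apply, ContinuousLinearMap.smul_apply,
        ContinuousLinearMap.one_apply, hzdef] using this
    have hres := shifted_resolvent A (s j) lam (Rr j) S (hRr j) hlamne hS1' hS2'
    rcases hlam with h | h
    · exact h ⟨_, hres⟩
    · have hroeq : resolventOf A lam = Rr j - (Rr j).comp (S.comp (Rr j)) :=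
        resolventOf_eq A lam _ hres
      rw [hroeq] at h
      have hbound : ‖Rr j - (Rr j).comp (S.comp (Rr j))‖
          ≤ ‖Rr j‖ + ‖Rr j‖ ^ 2 / c := by
        apply ContinuousLinearMap.opNorm_le_bound
        · have := norm_nonneg (Rr j)
          positivity
        · intro y
          have e1 : (Rr j - (Rr j).comp (S.comp (Rr j))) y
              = Rr j y - Rr j (S (Rr j y)) := by
            simp [ContinuousLinearMap.sub_apply, ContinuousLinearMap.comp_apply]
          rw [e1]
          have b1 : ‖Rr j y‖ ≤ ‖Rr j‖ * ‖y‖ := ContinuousLinearMap.le_opNorm _ _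
          have b2 : ‖Rr j (S (Rr j y))‖ ≤ ‖Rr j‖ * ‖S (Rr j y)‖ :=
            ContinuousLinearMap.le_opNorm _ _
          have b3 : ‖S (Rr j y)‖ ≤ c⁻¹ * ‖Rr j y‖ := hSb _
          have b4 : ‖Rr j y - Rr j (S (Rr j y))‖ ≤ ‖Rr j y‖ + ‖Rr j (S (Rr j y))‖ :=
            norm_sub_le _ _
          have hR0 : (0:ℝ) ≤ ‖Rr j‖ := norm_nonneg _
          have hy0 : (0:ℝ) ≤ ‖y‖ := norm_nonneg _
          have hcinv : (0:ℝ) ≤ c⁻¹ := by positivity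
          have b5 : ‖S (Rr j y)‖ ≤ c⁻¹ * (‖Rr j‖ * ‖y‖) := by
            calc ‖S (Rr j y)‖ ≤ c⁻¹ * ‖Rr j y‖ := b3
              _ ≤ c⁻¹ * (‖Rr j‖ * ‖y‖) := mul_le_mul_of_nonneg_left b1 hcinv
          have hceq : ‖Rr j‖ ^ 2 / c = ‖Rr j‖ * (c⁻¹ * ‖Rr j‖) := by
            field_simp
          calc ‖Rr j y - Rr j (S (Rr j y))‖
              ≤ ‖Rr j y‖ + ‖Rr j (S (Rr j y))‖ := b4
            _ ≤ ‖Rr j‖ * ‖y‖ + ‖Rr j‖ * (c⁻¹ * (‖Rr j‖ * ‖y‖)) := by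
                have := mul_le_mul_of_nonneg_left b5 hR0
                linarith
            _ = (‖Rr j‖ + ‖Rr j‖ ^ 2 / c) * ‖y‖ := by
                rw [hceq]
                ring
      have hlt : 1 / ε < ‖Rr j‖ + ‖Rr j‖ ^ 2 / c := lt_of_lt_of_le h hbound
      -- arithmetic contradiction
      have hδ'eq : δ' j * (1 - ‖Rr j‖ * ε) = ‖Rr j‖ ^ 2 * ε := by
        simp only [hδ'def]
        exact div_mul_cancel₀ _ (ne_of_gt (hden j))
      have hd := hden j
      have hg := hγ j
      have h2 : c * (1 / ε) < c * ‖Rr j‖ + ‖Rr j‖ ^ 2 := by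
        have := mul_lt_mul_of_pos_left hlt hc
        rw [mul_add] at this
        rw [mul_div_cancel₀ _ (ne_of_gt hc)] at this
        linarith
      have h3 : c < (c * ‖Rr j‖ + ‖Rr j‖ ^ 2) * ε := by
        have := mul_lt_mul_of_pos_right h2 hε0
        have he : c * (1 / ε) * ε = c := by
          field_simp
        rw [he] at this
        exact this
      have h4 : c * (1 - ‖Rr j‖ * ε) < ‖Rr j‖ ^ 2 * ε := by nlinarith
      have h5 : c * (1 - ‖Rr j‖ * ε) = δ' j * (1 - ‖Rr j‖ * ε) + γ j * (1 - ‖Rr j‖ * ε) := by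
        simp only [hcdef]
        ring
      nlinarith
  obtain ⟨w, hw, hdzw⟩ := hA
  obtain ⟨w', hw', hdww'⟩ := hn₀ n hn j w hw
  -- assemble membership
  simp only [shiftSet, invSet, nbhdSet, Set.mem_setOf_eq]
  refine ⟨lam - s j, ⟨z, ⟨w', hw', ?_⟩, inv_ne_zero hlamne, ?_⟩, ?_⟩
  · calc dist z w' ≤ dist z w + dist w w' := dist_triangle _ _ _
      _ < (δ' j + γ j) + 2 * γ j := by linarith
      _ = δ j := by
          simp only [hγdef]
          ring
  · rw [hzdef, inv_inv]
  · ring
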